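/- Let (B,+,·) be a finite two-sided skew brace such that the additive group (B,+) is solvable. Then the multiplicative group (B,·) is solvable. -/

import Mathlib

/-- A skew brace structure on a type `B` carrying both an additive group
structure `(B, +)` and a multiplicative group structure `(B, ·)`:
`a · (b + c) = a · b - a + a · c` for all `a b c`. -/
class SkewBrace (B : Type*) [AddGroup B] [Group B] : Prop where
  left_compat : ∀ a b c : B, a * (b + c) = a * b - a + a * c

/-- A two-sided skew brace additionally satisfies
`(a + b) · c = a · c - c + b · c` for all `a b c`. -/
class TwoSidedSkewBrace (B : Type*) [AddGroup B] [Group B] extends SkewBrace B : Prop where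
  right_compat : ∀ a b c : B, (a + b) * c = a * c - c + b * c

namespace Nasy

universe u

section basic
variable {B : Type u} [AddGroup B] [Group B] [SkewBrace B]

lemma mul_zero' (a : B) : a * 0 = a := by
  have h := SkewBrace.left_compat a 0 0
  rw [add_zero, sub_eq_add_neg, add_assoc] at h
  have h2 : a * 0 + 0 = a * 0 + (-a + a * 0) := by rw [add_zero]; exact h
  have h3 := add_left_cancel h2
  -- h3 : 0 = -a + a * 0
  have h4 : a + 0 = a + (-a + a * 0) := by rw [← h3]
  rw [add_zero, ← add_assoc, add_neg_cancel, zero_add] at h4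
  exact h4.symm

lemma one_eq_zero : (1 : B) = 0 := by
  have := mul_zero' (1 : B); rw [one_mul] at this; exact this.symm

lemma zero_mul' (a : B) : (0 : B) * a = a := by rw [← one_eq_zero, one_mul]

/-- The lambda map `b ↦ -a + a*b`, an additive homomorphism. -/
def lam (a : B) : B →+ B :=
  AddMonoidHom.mk' (fun b => -a + a * b) (by
    intro b c
    show -a + a * (b + c) = (-a + a * b) + (-a + a * c)
    rw [SkewBrace.left_compat a b c, sub_eq_add_neg, add_assoc, add_assoc, ← add_assoc])

lemma lam_apply (a b : B) : lam a b = -a + a * b := rfl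

lemma mul_eq_lam (a b : B) : a * b = a + lam a b := by
  rw [lam_apply, ← add_assoc, add_neg_cancel, zero_add]

lemma lam_mul (a x b : B) : lam (a * x) b = lam a (lam x b) := by
  have h1 : lam x b = -x + x * b := rfl
  rw [h1, map_add (lam a), map_neg (lam a), lam_apply, lam_apply, lam_apply, mul_assoc,
    neg_add_rev, neg_neg, add_assoc, ← add_assoc a (-a), add_neg_cancel, zero_add]

lemma lam_one (b : B) : lam (1 : B) b = b := by
  rw [lam_apply, one_mul, one_eq_zero, neg_zero, zero_add]

lemma inv_eq_lam (x : B) : x⁻¹ = lam x⁻¹ (-x) := by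
  have h : lam x x⁻¹ = -x := by
    have := mul_eq_lam x x⁻¹
    rw [mul_inv_cancel, one_eq_zero] at this
    rw [← neg_eq_of_add_eq_zero_right this.symm]
  calc x⁻¹ = lam (x⁻¹ * x) x⁻¹ := by rw [inv_mul_cancel, lam_one]
    _ = lam x⁻¹ (lam x x⁻¹) := lam_mul _ _ _
    _ = lam x⁻¹ (-x) := by rw [h]

/-- star map -/
def sb (a b : B) : B := lam a b - b

lemma mul_eq_sb (a b : B) : a * b = a + (sb a b + b) := by
  rw [sb, sub_eq_add_neg, add_assoc, neg_add_cancel, add_zero, ← mul_eq_lam]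

lemma lam_sb (a x y : B) : lam a (sb x y) = sb (a * x) y - sb a y := by
  rw [sb, map_sub, ← lam_mul, sb, sb]
  simp only [sub_eq_add_neg, neg_add_rev, neg_neg, add_assoc, neg_add_cancel_left]

lemma sb_mem_form (a b : B) : sb a b = -a + a * b - b := rfl

end basic

section tsb
variable {B : Type u} [AddGroup B] [Group B] [TwoSidedSkewBrace B]

/-- The rho map `a ↦ a*c - c`, an additive homomorphism. -/
def rho (c : B) : B →+ B :=
  AddMonoidHom.mk' (fun a => a * c - c) (by
    intro a b
    show (a + b) * c - c = (a * c - c) + (b * c - c)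
    rw [TwoSidedSkewBrace.right_compat a b c]
    simp only [sub_eq_add_neg, add_assoc])

lemma rho_apply (a c : B) : rho c a = a * c - c := rfl

lemma mul_eq_rho (a c : B) : a * c = rho c a + c := by
  rw [rho_apply, sub_eq_add_neg, add_assoc, neg_add_cancel, add_zero]

end tsb

section subgroups
variable (B : Type u) [AddGroup B] [Group B] [SkewBrace B]

/-- additive commutators -/
def commSet : Set B := {x : B | ∃ a b : B, x = a + b - a - b}

/-- star values -/
def sbSet : Set B := {x : B | ∃ a b : B, x = sb a b}

variable {B}

lemma normal_of_commSet_subset {H : AddSubgroup B} (h : commSet B ⊆ H) : H.Normal := by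
  constructor
  intro n hn g
  have h1 : (g + n - g - n) ∈ H := h ⟨g, n, rfl⟩
  have h2 : g + n + -g = (g + n - g - n) + n := by
    simp only [sub_eq_add_neg, add_assoc, neg_add_cancel, add_zero]
  rw [h2]
  exact AddSubgroup.add_mem H h1 hn

lemma comm_mem_of_commSet_subset {H : AddSubgroup B} (h : commSet B ⊆ H) (a b : B) :
    a + b - a - b ∈ H := h ⟨a, b, rfl⟩

/-- A lambda-invariant additive subgroup is closed under multiplicative inversion. -/
lemma inv_mem_of_lam_inv {H : AddSubgroup B} (hlam : ∀ a : B, ∀ x ∈ H, lam a x ∈ H)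
    {x : B} (hx : x ∈ H) : x⁻¹ ∈ H := by
  rw [inv_eq_lam]
  exact hlam _ _ (neg_mem hx)

end subgroups

section nak
variable {Q : Type u} [AddCommGroup Q] [Group Q]
variable (h1 : ∀ a b c : Q, a * (b + c) = a * b - a + a * c)
variable (h2 : ∀ a b c : Q, (a + b) * c = a * c - c + b * c)

/-- ring multiplication -/
private def m (a b : Q) : Q := a * b - a - b

include h1 in
lemma nak_one_zero : (1 : Q) = 0 := by
  have h := h1 1 0 0
  rw [add_zero, one_mul] at h
  -- h : 0 = 0 - 1 + 0
  simp only [zero_sub, add_zero] at h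
  exact neg_eq_zero.mp h.symm

include h1 in
lemma nak_mul_zero (a : Q) : a * 0 = a := by
  have h := h1 a 0 0
  rw [add_zero] at h
  have h3 : a * 0 + a = a * 0 + a * 0 := by nth_rewrite 1 [h]; abel
  exact (add_left_cancel h3).symm

include h1 in
lemma nak_zero_mul (a : Q) : (0 : Q) * a = a := by
  rw [← nak_one_zero h1, one_mul]

include h2 in
lemma nak_P1 (a b c : Q) : (a + b) * c = a * c + b * c - c := by rw [h2]; abel

include h1 in
lemma nak_P2 (a b c : Q) : a * (b + c) = a * b + a * c - a := by rw [h1]; abel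

include h1 h2 in
lemma nak_P4 (a c : Q) : (-a) * c = -(a * c) + c + c := by
  have h := nak_P1 h2 a (-a) c
  rw [add_neg_cancel, nak_zero_mul h1] at h
  -- h : c = a * c + (-a) * c - c
  have key : (-a) * c - (-(a * c) + c + c) = (a * c + (-a) * c - c) - c := by abel
  rw [← h, sub_self] at key
  exact sub_eq_zero.mp key

include h1 in
lemma nak_P5 (a c : Q) : a * (-c) = -(a * c) + a + a := by
  have h := nak_P2 h1 a c (-c)
  rw [add_neg_cancel, nak_mul_zero h1] at h
  -- h : a = a * c + a * (-c) - a
  have key : a * (-c) - (-(a * c) + a + a) = (a * c + a * (-c) - a) - a := by abel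
  rw [← h, sub_self] at key
  exact sub_eq_zero.mp key

include h1 h2 in
lemma nak_rdist (a b c : Q) : m (a + b) c = m a c + m b c := by
  unfold m; rw [nak_P1 h2]; abel

include h1 in
lemma nak_ldist (a b c : Q) : m a (b + c) = m a b + m a c := by
  unfold m; rw [nak_P2 h1]; abel

include h1 in
lemma nak_m_zero_right (a : Q) : m a 0 = 0 := by
  unfold m; rw [nak_mul_zero h1]; abel

include h1 in
lemma nak_m_zero_left (b : Q) : m 0 b = 0 := by
  unfold m; rw [nak_zero_mul h1]; abel

include h1 h2 in
lemma nak_m_neg_left (a b : Q) : m (-a) b = -(m a b) := by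
  have h := nak_rdist h1 h2 a (-a) b
  rw [add_neg_cancel, nak_m_zero_left h1] at h
  exact (neg_eq_of_add_eq_zero_right h.symm).symm

include h1 h2 in
lemma nak_m_neg_right (a b : Q) : m a (-b) = -(m a b) := by
  have h := nak_ldist h1 a b (-b)
  rw [add_neg_cancel, nak_m_zero_right h1] at h
  exact (neg_eq_of_add_eq_zero_right h.symm).symm

include h1 h2 in
lemma nak_massoc (a b c : Q) : m (m a b) c = m a (m b c) := by
  unfold m
  simp only [sub_eq_add_neg, nak_P1 h2, nak_P2 h1, nak_P4 h1 h2, nak_P5 h1, mul_assoc]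
  abel

include h1 h2 in
lemma nak_ztrick (x a : Q) (h : m x a = a) : a = 0 := by
  set z := (-x)⁻¹ with hz
  have hzx : m z x = z - x := by
    have h0 : z * (-x) = 0 := by rw [hz, inv_mul_cancel, nak_one_zero h1]
    have : m z (-x) = x - z := by unfold m; rw [h0]; abel
    have h4 := nak_m_neg_right h1 h2 z x
    rw [this] at h4
    have : m z x = -(x - z) := by rw [h4, neg_neg]
    rw [this]; abel
  have key : m z a = m z a - a := by
    calc m z a = m z (m x a) := by rw [h]
      _ = m (m z x) a := (nak_massoc h1 h2 z x a).symm
      _ = m (z - x) a := by rw [hzx]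
      _ = m z a + m (-x) a := by rw [sub_eq_add_neg, nak_rdist h1 h2]
      _ = m z a - m x a := by rw [nak_m_neg_left h1 h2]; abel
      _ = m z a - a := by rw [h]
  have : a = 0 := by
    have := sub_eq_zero.mpr key.symm
    -- (m z a - a) - m z a = 0 ... simpler:
    have h5 : m z a + 0 = m z a + -a := by rw [add_zero]; nth_rewrite 1 [key]; abel
    have := add_left_cancel h5
    rw [← neg_zero, neg_inj] at this
    exact this.symm
  exact this

include h1 h2 in
lemma nak_main [Finite Q]
    (hS : AddSubgroup.closure {x : Q | ∃ a b : Q, x = a * b - a - b} = ⊤) :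
    Subsingleton Q := by
  classical
  -- the set of generators is the set of values of m
  have hSm : {x : Q | ∃ a b : Q, x = a * b - a - b} = {x : Q | ∃ a b : Q, x = m a b} := by
    unfold m; rfl
  rw [hSm] at hS
  -- main induction
  have main : ∀ (n : ℕ) (A : AddSubgroup Q), Nat.card A ≤ n →
      (∀ x : Q, ∀ b ∈ A, m x b ∈ A) → ¬(∃ x b, b ∈ A ∧ m x b ≠ 0) := by
    intro n
    induction n with
    | zero =>
      intro A hcard _ _
      have : 0 < Nat.card A := Nat.card_pos
      omega
    | succ n ih =>
      intro A hcard hinv hex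
      obtain ⟨x₀, a, ha, hx₀⟩ := hex
      -- the additive hom y ↦ m y a
      have ra_add : ∀ y z : Q, m (y + z) a = m y a + m z a := fun y z => nak_rdist h1 h2 y z a
      let ra : Q →+ Q := AddMonoidHom.mk' (fun y => m y a) ra_add
      let bb : AddSubgroup Q := ra.range
      have hbbA : bb ≤ A := by
        rintro _ ⟨y, rfl⟩
        exact hinv y a ha
      have hbbinv : ∀ x : Q, ∀ b ∈ bb, m x b ∈ bb := by
        rintro x _ ⟨y, rfl⟩
        exact ⟨m x y, nak_massoc h1 h2 x y a⟩
      have hbbex : ∃ x b, b ∈ bb ∧ m x b ≠ 0 := by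
        by_contra hno
        push_neg at hno
        have hker : ∀ g ∈ AddSubgroup.closure {x : Q | ∃ a b : Q, x = m a b}, ra g = 0 := by
          intro g hg
          have hle : AddSubgroup.closure {x : Q | ∃ a b : Q, x = m a b} ≤ ra.ker := by
            rw [AddSubgroup.closure_le]
            rintro _ ⟨u, v, rfl⟩
            have hva : m v a ∈ bb := ⟨v, rfl⟩
            have : ra (m u v) = m u (m v a) := nak_massoc h1 h2 u v a
            have h0 : m u (m v a) = 0 := hno u (m v a) hva
            show ra (m u v) = 0
            rw [this, h0]
          exact hle hg
        have : ra x₀ = 0 := hker x₀ (by rw [hS]; trivial)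
        exact hx₀ this
      -- compare bb with A
      by_cases hba : bb = A
      · -- a ∈ bb, so a = m y a for some y, so a = 0
        have haa : a ∈ bb := by rw [hba]; exact ha
        obtain ⟨y, hy⟩ := haa
        have : a = 0 := nak_ztrick h1 h2 y a hy
        rw [this, nak_m_zero_right h1] at hx₀
        exact hx₀ rfl
      · have hlt : bb < A := lt_of_le_of_ne hbbA hba
        have hcardlt : Nat.card bb < Nat.card A := by
          obtain ⟨w, hwA, hwb⟩ := SetLike.exists_of_lt hlt
          have : Nat.card {y : A // (y : Q) ∈ bb} < Nat.card A :=
            Finite.card_subtype_lt (x := ⟨w, hwA⟩) hwb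
          have hequiv : bb ≃ {y : A // (y : Q) ∈ bb} := by
            refine ⟨fun z => ⟨⟨z, hbbA z.2⟩, z.2⟩, fun z => ⟨z.1, z.2⟩, fun z => rfl, fun z => rfl⟩
          rwa [Nat.card_congr hequiv]
        exact ih bb (by omega) hbbinv hbbex
  have hall : ∀ x b : Q, m x b = 0 := by
    have := main (Nat.card (⊤ : AddSubgroup Q)) ⊤ le_rfl (fun x b _ => trivial)
    push_neg at this
    intro x b
    exact this x b trivial
  constructor
  intro p q
  have hzero : ∀ r : Q, r = 0 := by
    intro r
    have hr : r ∈ AddSubgroup.closure {x : Q | ∃ a b : Q, x = m a b} := by rw [hS]; trivial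
    have hle : AddSubgroup.closure {x : Q | ∃ a b : Q, x = m a b} ≤ ⊥ := by
      rw [AddSubgroup.closure_le]
      rintro _ ⟨u, v, rfl⟩
      simp [hall u v]
    simpa using hle hr
  rw [hzero p, hzero q]

end nak

section quot
variable {B : Type u} [AddGroup B] [Group B] [TwoSidedSkewBrace B]
variable (D : AddSubgroup B) [hN : D.Normal]
variable (hlam : ∀ a : B, ∀ x ∈ D, lam a x ∈ D)
variable (hrho : ∀ c : B, ∀ x ∈ D, rho c x ∈ D)

include hlam hrho in
lemma qmul_wd {a b a' b' : B} (ht : -a + a' ∈ D) (hu : -b + b' ∈ D) :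
    -(a * b) + a' * b' ∈ D := by
  have ha' : a' = a + (-a + a') := by rw [add_neg_cancel_left]
  have hb' : b' = b + (-b + b') := by rw [add_neg_cancel_left]
  set t := -a + a' with htdef
  set u := -b + b' with hudef
  set v := b + u with hvdef
  have e1 : (a + t) * v = a * v - v + t * v := TwoSidedSkewBrace.right_compat a t v
  have e2 : a * v = a * b + lam a u := by
    rw [hvdef, SkewBrace.left_compat a b u, lam_apply, sub_eq_add_neg, add_assoc]
  have e3 : t * v = rho v t + v := mul_eq_rho t v
  have e4 : a' * b' = a * b + (lam a u + (-v + (rho v t + v))) := by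
    rw [ha', hb', e1, e2, e3]
    simp only [sub_eq_add_neg, add_assoc]
  rw [e4, ← add_assoc, neg_add_cancel, zero_add]
  refine AddSubgroup.add_mem D (hlam a u hu) ?_
  have := hN.conj_mem _ (hrho v t ht) (-v)
  rwa [neg_neg, add_assoc] at this

include hlam hrho in
lemma qinv_wd {a a' : B} (ht : -a + a' ∈ D) : -(a⁻¹) + a'⁻¹ ∈ D := by
  have ha' : a' = a + (-a + a') := by rw [add_neg_cancel_left]
  set t := -a + a' with htdef
  have hd : lam a⁻¹ t ∈ D := hlam a⁻¹ t ht
  set d := lam a⁻¹ t with hddef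
  have had : a * d = a' := by
    rw [mul_eq_lam, hddef, ← lam_mul, mul_inv_cancel, lam_one, ← ha']
  have hdinv : d⁻¹ ∈ D := inv_mem_of_lam_inv hlam hd
  have hinv : a'⁻¹ = rho a⁻¹ d⁻¹ + a⁻¹ := by
    rw [← had, mul_inv_rev, mul_eq_rho]
  rw [hinv, ← add_assoc]
  have := hN.conj_mem _ (hrho a⁻¹ d⁻¹ hdinv) (-a⁻¹)
  rwa [neg_neg] at this
  
include hlam hrho in
/-- descended multiplication on the quotient -/
def qmul (x y : B ⧸ D) : B ⧸ D :=
  Quotient.liftOn₂' x y (fun a b => ((a * b : B) : B ⧸ D))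
    (fun a b a' b' ha hb => by
      apply QuotientAddGroup.eq.mpr
      exact qmul_wd D hlam hrho (QuotientAddGroup.leftRel_apply.mp ha)
        (QuotientAddGroup.leftRel_apply.mp hb))

lemma qmul_mk (a b : B) : qmul D hlam hrho (↑a) (↑b) = ((a * b : B) : B ⧸ D) := rfl

include hlam hrho in
/-- descended inversion on the quotient -/
def qinv (x : B ⧸ D) : B ⧸ D :=
  Quotient.liftOn' x (fun a => ((a⁻¹ : B) : B ⧸ D))
    (fun a a' ha => by
      apply QuotientAddGroup.eq.mpr
      exact qinv_wd D hlam hrho (QuotientAddGroup.leftRel_apply.mp ha))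

lemma qinv_mk (a : B) : qinv D hlam hrho (↑a) = ((a⁻¹ : B) : B ⧸ D) := rfl

include hlam hrho in
/-- descended group structure on the quotient -/
def qgroup : Group (B ⧸ D) where
  mul := qmul D hlam hrho
  one := ((1 : B) : B ⧸ D)
  inv := qinv D hlam hrho
  mul_assoc := by
    intro x y z
    induction x using Quotient.inductionOn' with | h a =>
    induction y using Quotient.inductionOn' with | h b =>
    induction z using Quotient.inductionOn' with | h c =>
    show qmul D hlam hrho (qmul D hlam hrho ↑a ↑b) ↑c
        = qmul D hlam hrho ↑a (qmul D hlam hrho ↑b ↑c)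
    rw [qmul_mk, qmul_mk, qmul_mk, qmul_mk, mul_assoc]
  one_mul := by
    intro x
    induction x using Quotient.inductionOn' with | h a =>
    show qmul D hlam hrho ((1 : B) : B ⧸ D) ↑a = ↑a
    rw [qmul_mk, one_mul]
  mul_one := by
    intro x
    induction x using Quotient.inductionOn' with | h a =>
    show qmul D hlam hrho ↑a ((1 : B) : B ⧸ D) = ↑a
    rw [qmul_mk, mul_one]
  inv_mul_cancel := by
    intro x
    induction x using Quotient.inductionOn' with | h a =>
    show qmul D hlam hrho (qinv D hlam hrho ↑a) ↑a = ((1 : B) : B ⧸ D)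
    rw [qinv_mk, qmul_mk, inv_mul_cancel]

end quot

section crux
variable {B : Type u} [AddGroup B] [Group B] [TwoSidedSkewBrace B]

open scoped commutatorElement in
lemma dtop (hadd : IsSolvable (Multiplicative B))
    (hD : AddSubgroup.closure (commSet B) = ⊤) : Subsingleton B := by
  let E : AddSubgroup B := Subgroup.toAddSubgroup' (commutator (Multiplicative B))
  have hEmem : ∀ x : B, x ∈ E ↔ Multiplicative.ofAdd x ∈ commutator (Multiplicative B) :=
    fun x => Iff.rfl
  have hcomm_top : commutator (Multiplicative B) = ⊤ := by
    rw [eq_top_iff]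
    intro g _
    have hg : (g.toAdd : B) ∈ AddSubgroup.closure (commSet B) := by rw [hD]; trivial
    have hle : AddSubgroup.closure (commSet B) ≤ E := by
      rw [AddSubgroup.closure_le]
      rintro _ ⟨a, b, rfl⟩
      rw [SetLike.mem_coe, hEmem]
      have he : Multiplicative.ofAdd (a + b - a - b)
          = ⁅Multiplicative.ofAdd a, Multiplicative.ofAdd b⁆ := by
        show Multiplicative.ofAdd (a + b - a - b) = Multiplicative.ofAdd a * Multiplicative.ofAdd b * (Multiplicative.ofAdd a)⁻¹ * (Multiplicative.ofAdd b)⁻¹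
        simp only [sub_eq_add_neg]
        rfl
      rw [he, commutator_def]
      exact Subgroup.commutator_mem_commutator (Subgroup.mem_top _) (Subgroup.mem_top _)
    exact hle hg
  have hds : ∀ n, derivedSeries (Multiplicative B) n = ⊤ := by
    intro n
    induction n with
    | zero => rfl
    | succ n ih => rw [derivedSeries_succ, ih, ← commutator_def, hcomm_top]
  obtain ⟨n, hn⟩ := hadd
  have htb : (⊤ : Subgroup (Multiplicative B)) = ⊥ := by rw [← hds n, hn]
  constructor
  intro p q
  have hz : ∀ x : B, x = 0 := by
    intro x
    have : Multiplicative.ofAdd x ∈ (⊥ : Subgroup (Multiplicative B)) := by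
      rw [← htb]; trivial
    have h1 : Multiplicative.ofAdd x = 1 := Subgroup.mem_bot.mp this
    exact h1
  rw [hz p, hz q]

variable [Finite B]

lemma crux (hadd : IsSolvable (Multiplicative B))
    (hT : AddSubgroup.closure (commSet B ∪ sbSet B) = ⊤) : Subsingleton B := by
  classical
  set D := AddSubgroup.closure (commSet B) with hDdef
  have hsub : commSet B ⊆ D := AddSubgroup.subset_closure
  haveI hN : D.Normal := normal_of_commSet_subset hsub
  have hmapcomm : ∀ f : B →+ B, f '' commSet B ⊆ commSet B := by
    rintro f _ ⟨_, ⟨p, q, rfl⟩, rfl⟩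
    exact ⟨f p, f q, by rw [map_sub, map_sub, map_add]⟩
  have hinvgen : ∀ f : B →+ B, ∀ x ∈ D, f x ∈ D := by
    intro f x hx
    have hle : AddSubgroup.map f D ≤ D := by
      rw [hDdef, AddMonoidHom.map_closure, AddSubgroup.closure_le]
      exact (hmapcomm f).trans AddSubgroup.subset_closure
    exact hle (AddSubgroup.mem_map_of_mem f hx)
  have hlam : ∀ a : B, ∀ x ∈ D, lam a x ∈ D := fun a => hinvgen (lam a)
  have hrho : ∀ c : B, ∀ x ∈ D, rho c x ∈ D := fun c => hinvgen (rho c)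
  letI qG : Group (B ⧸ D) := qgroup D hlam hrho
  have qmk_mul : ∀ a b : B, ((a : B ⧸ D) * (b : B ⧸ D)) = ((a * b : B) : B ⧸ D) :=
    fun a b => rfl
  have qmk_add : ∀ a b : B, ((a : B ⧸ D) + (b : B ⧸ D)) = ((a + b : B) : B ⧸ D) :=
    fun a b => rfl
  have qmk_sub : ∀ a b : B, ((a : B ⧸ D) - (b : B ⧸ D)) = ((a - b : B) : B ⧸ D) :=
    fun a b => (QuotientAddGroup.mk_sub D a b).symm
  have qcomm : ∀ x y : B ⧸ D, x + y = y + x := by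
    intro x y
    induction x using Quotient.inductionOn' with | h a =>
    induction y using Quotient.inductionOn' with | h b =>
    show ((a : B ⧸ D) + b) = ((b : B ⧸ D) + a)
    rw [qmk_add, qmk_add]
    apply QuotientAddGroup.eq.mpr
    refine hsub ⟨-b, -a, ?_⟩
    simp only [sub_eq_add_neg, neg_neg, neg_add_rev, add_assoc]
  have qh1 : ∀ x y z : B ⧸ D, x * (y + z) = x * y - x + x * z := by
    intro x y z
    induction x using Quotient.inductionOn' with | h a =>
    induction y using Quotient.inductionOn' with | h b =>
    induction z using Quotient.inductionOn' with | h c =>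
    show ((a : B ⧸ D)) * (↑b + ↑c) = ↑a * ↑b - ↑a + ↑a * ↑c
    rw [qmk_add b c, qmk_mul, qmk_mul, qmk_mul, qmk_sub, qmk_add]
    exact congrArg _ (SkewBrace.left_compat a b c)
  have qh2 : ∀ x y z : B ⧸ D, (x + y) * z = x * z - z + y * z := by
    intro x y z
    induction x using Quotient.inductionOn' with | h a =>
    induction y using Quotient.inductionOn' with | h b =>
    induction z using Quotient.inductionOn' with | h c =>
    show ((a : B ⧸ D) + ↑b) * ↑c = ↑a * ↑c - ↑c + ↑b * ↑c
    rw [qmk_add a b, qmk_mul, qmk_mul, qmk_mul, qmk_sub, qmk_add]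
    exact congrArg _ (TwoSidedSkewBrace.right_compat a b c)
  have swap3 : ∀ u v w : B ⧸ D, -u + v - w = v - u - w := by
    intro u v w
    simp only [sub_eq_add_neg]
    rw [qcomm (-u) v]
  have hS : AddSubgroup.closure {x : B ⧸ D | ∃ a b : B ⧸ D, x = a * b - a - b} = ⊤ := by
    rw [eq_top_iff]
    intro q _
    induction q using Quotient.inductionOn' with | h r =>
    have hr : r ∈ AddSubgroup.closure (commSet B ∪ sbSet B) := by rw [hT]; trivial
    have hmk : ((r : B ⧸ D)) ∈ AddSubgroup.map (QuotientAddGroup.mk' D)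
        (AddSubgroup.closure (commSet B ∪ sbSet B)) :=
      AddSubgroup.mem_map_of_mem _ hr
    rw [AddMonoidHom.map_closure] at hmk
    refine (AddSubgroup.closure_le _).mpr ?_ hmk
    rintro _ ⟨w, hw, rfl⟩
    cases hw with
    | inl hcm =>
      obtain ⟨p, q, rfl⟩ := hcm
      have h0 : (QuotientAddGroup.mk' D) (p + q - p - q) = 0 :=
        (QuotientAddGroup.eq_zero_iff _).mpr (hsub ⟨p, q, rfl⟩)
      rw [h0]
      exact zero_mem _
    | inr hsb =>
      obtain ⟨p, q, rfl⟩ := hsb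
      refine AddSubgroup.subset_closure ⟨(p : B ⧸ D), (q : B ⧸ D), ?_⟩
      show ((sb p q : B) : B ⧸ D) = _
      rw [sb_mem_form]
      calc ((-p + p * q - q : B) : B ⧸ D)
          = -(p : B ⧸ D) + ((p * q : B) : B ⧸ D) - ↑q := by
            rw [QuotientAddGroup.mk_sub, QuotientAddGroup.mk_add, QuotientAddGroup.mk_neg]
        _ = ((p * q : B) : B ⧸ D) - ↑p - ↑q := swap3 _ _ _
        _ = (p : B ⧸ D) * ↑q - ↑p - ↑q := by rw [qmk_mul]
  letI qC : AddCommGroup (B ⧸ D) :=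
    { (inferInstance : AddGroup (B ⧸ D)) with add_comm := qcomm }
  haveI : Finite (B ⧸ D) := Quotient.finite _
  have hQss : Subsingleton (B ⧸ D) := nak_main qh1 qh2 hS
  have hDtop : AddSubgroup.closure (commSet B) = ⊤ := by
    rw [← hDdef, eq_top_iff]
    intro x _
    have h0 : ((x : B ⧸ D)) = ((0 : B) : B ⧸ D) := Subsingleton.elim _ _
    have := QuotientAddGroup.eq.mp h0
    rwa [add_zero, neg_mem_iff] at this
  exact dtop hadd hDtop

end crux

section main
variable {B : Type u} [AddGroup B] [Group B] [TwoSidedSkewBrace B]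

variable (B) in
/-- the fundamental ideal -/
def TT : AddSubgroup B := AddSubgroup.closure (commSet B ∪ sbSet B)

lemma sb_mem_TT (a b : B) : sb a b ∈ TT B :=
  AddSubgroup.subset_closure (Or.inr ⟨a, b, rfl⟩)

lemma comm_subset_TT : commSet B ⊆ TT B :=
  fun _ hx => AddSubgroup.subset_closure (Or.inl hx)

lemma TT_normal : (TT B).Normal := normal_of_commSet_subset comm_subset_TT

lemma lam_mem_TT (a : B) {x : B} (hx : x ∈ TT B) : lam a x ∈ TT B := by
  have hle : AddSubgroup.map (lam a) (TT B) ≤ TT B := by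
    rw [TT, AddMonoidHom.map_closure, AddSubgroup.closure_le]
    rintro _ ⟨w, hw, rfl⟩
    cases hw with
    | inl hcm =>
      obtain ⟨p, q, rfl⟩ := hcm
      exact comm_subset_TT ⟨lam a p, lam a q, by rw [map_sub, map_sub, map_add]⟩
    | inr hsb =>
      obtain ⟨p, q, rfl⟩ := hsb
      rw [SetLike.mem_coe, lam_sb]
      exact AddSubgroup.sub_mem _ (sb_mem_TT (a * p) q) (sb_mem_TT a q)
  exact hle (AddSubgroup.mem_map_of_mem _ hx)

lemma mul_mem_TT {x y : B} (hx : x ∈ TT B) (hy : y ∈ TT B) : x * y ∈ TT B := by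
  rw [mul_eq_sb]
  exact AddSubgroup.add_mem _ hx (AddSubgroup.add_mem _ (sb_mem_TT x y) hy)

lemma one_mem_TT : (1 : B) ∈ TT B := by
  rw [one_eq_zero]; exact AddSubgroup.zero_mem _

lemma inv_mem_TT {x : B} (hx : x ∈ TT B) : x⁻¹ ∈ TT B :=
  inv_mem_of_lam_inv (fun a x hx => lam_mem_TT a hx) hx

end main

theorem aux : ∀ (n : ℕ) (B : Type u) [AddGroup B] [Group B] [TwoSidedSkewBrace B] [Finite B],
    IsSolvable (Multiplicative B) → Nat.card B ≤ n → IsSolvable B := by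
  intro n
  induction n with
  | zero =>
    intro B _ _ _ _ _ hcard
    have : 0 < Nat.card B := Nat.card_pos
    omega
  | succ n ih =>
    intro B _ _ _ _ hadd hcard
    rcases subsingleton_or_nontrivial B with hss | hnt
    · haveI : CommGroup B :=
        { (inferInstance : Group B) with mul_comm := fun a b => Subsingleton.elim _ _ }
      exact (inferInstance : Group.IsSolvable B)
    · have hTne : TT B ≠ ⊤ := by
        intro h
        exact (not_subsingleton B) (crux hadd h)
      obtain ⟨w, hw⟩ : ∃ w : B, w ∉ TT B := by
        by_contra hall
        push_neg at hall
        exact hTne ((AddSubgroup.eq_top_iff' _).mpr hall)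
      have hcardT : Nat.card ↥(TT B) < Nat.card B := Finite.card_subtype_lt hw
      letI instG : Group ↥(TT B) :=
        { mul := fun x y => ⟨x.1 * y.1, mul_mem_TT x.2 y.2⟩
          one := ⟨1, one_mem_TT⟩
          inv := fun x => ⟨x.1⁻¹, inv_mem_TT x.2⟩
          mul_assoc := fun a b c => Subtype.ext (mul_assoc a.1 b.1 c.1)
          one_mul := fun a => Subtype.ext (one_mul a.1)
          mul_one := fun a => Subtype.ext (mul_one a.1)
          inv_mul_cancel := fun a => Subtype.ext (inv_mul_cancel a.1) }
      letI instSB : SkewBrace ↥(TT B) :=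
        ⟨fun a b c => Subtype.ext (SkewBrace.left_compat a.1 b.1 c.1)⟩
      letI instTSB : TwoSidedSkewBrace ↥(TT B) :=
        ⟨fun a b c => Subtype.ext (TwoSidedSkewBrace.right_compat a.1 b.1 c.1)⟩
      haveI : Group.IsSolvable (Multiplicative B) := hadd
      haveI hsolvT : IsSolvable (Multiplicative ↥(TT B)) := by
        refine solvable_of_solvable_injective
          (f := AddMonoidHom.toMultiplicative (TT B).subtype) ?_
        intro a b h
        have h2 : ((TT B).subtype) a.toAdd = ((TT B).subtype) b.toAdd := h
        exact AddSubgroup.subtype_injective _ h2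
      haveI hsolvX : Group.IsSolvable ↥(TT B) := ih ↥(TT B) hsolvT (by omega)
      haveI : (TT B).Normal := TT_normal
      haveI hsolvQ : Group.IsSolvable (Multiplicative (B ⧸ TT B)) := by
        refine solvable_of_surjective
          (f := AddMonoidHom.toMultiplicative (QuotientAddGroup.mk' (TT B))) ?_
        intro q
        induction q using Quotient.inductionOn' with | h r =>
        exact ⟨r, rfl⟩
      let f : ↥(TT B) →* B :=
        { toFun := Subtype.val, map_one' := rfl, map_mul' := fun _ _ => rfl }
      let ψ : B →* Multiplicative (B ⧸ TT B) :=
        { toFun := fun a => Multiplicative.ofAdd (QuotientAddGroup.mk a)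
          map_one' := by
            show Multiplicative.ofAdd (((1 : B) : B ⧸ TT B)) = 1
            rw [one_eq_zero]
            rfl
          map_mul' := fun a b => by
            show Multiplicative.ofAdd ((a * b : B) : B ⧸ TT B)
              = Multiplicative.ofAdd ((a : B ⧸ TT B)) * Multiplicative.ofAdd ((b : B ⧸ TT B))
            have he : ((a * b : B) : B ⧸ TT B) = ((a : B ⧸ TT B) + ↑b) := by
              rw [mul_eq_sb a b, QuotientAddGroup.mk_add, QuotientAddGroup.mk_add,
                (QuotientAddGroup.eq_zero_iff _).mpr (sb_mem_TT a b), zero_add]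
            rw [he]
            rfl }
      refine solvable_of_ker_le_range f ψ ?_
      intro x hx
      have hmk : ((x : B) : B ⧸ TT B) = 0 := hx
      have hmem : x ∈ TT B := (QuotientAddGroup.eq_zero_iff x).mp hmk
      exact ⟨⟨x, hmem⟩, rfl⟩

end Nasy


/-- Nasybullov's theorem: a finite two-sided skew brace whose additive group
`(B, +)` is solvable has solvable multiplicative group `(B, ·)`. -/
theorem solvable_mul_of_finite_twoSidedSkewBrace
    (B : Type*) [AddGroup B] [Group B] [TwoSidedSkewBrace B] [Finite B]
    (hadd : IsSolvable (Multiplicative B)) :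
    IsSolvable B := by
  exact Nasy.aux (Nat.card B) B hadd le_rfl
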